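/- Define a*_k = (-1)^k (E_k(1/2) + (3^k - 2)/2^k). Then for every n ≥ 0, Σ_{k=0}^n C(n,k) (x - 1/2)^{n-k} a*_k = (-1)^n E_n(-x+1) - 2(x-1)^n + (x-2)^n as polynomials in x. -/

import Mathlib

open Finset

/-- Bernoulli polynomials evaluated at a real number. -/
noncomputable def bernoulliPoly (n : ℕ) (x : ℝ) : ℝ :=
  ((Polynomial.bernoulli n).map (algebraMap ℚ ℝ)).eval x

/-- Euler polynomials `E_n(x)` defined via `2 e^{xt}/(e^t+1) = ∑ E_n(x) t^n/n!`. -/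
noncomputable def eulerPoly (n : ℕ) (x : ℝ) : ℝ :=
  (n.factorial : ℝ) * PowerSeries.coeff n
    (2 * PowerSeries.mk (fun k => x ^ k / (k.factorial : ℝ)) * (PowerSeries.exp ℝ + 1)⁻¹)


section EulerAux
open Finset PowerSeries

noncomputable def Gser (x : ℝ) : PowerSeries ℝ := 2 * rescale x (exp ℝ) * (exp ℝ + 1)⁻¹

lemma ccne : PowerSeries.constantCoeff (exp ℝ + 1) ≠ 0 := by
  simp [PowerSeries.constantCoeff_exp]

lemma euler_eq (n : ℕ) (x : ℝ) :
    eulerPoly n x = (n.factorial : ℝ) * PowerSeries.coeff n (Gser x) := by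
  have : PowerSeries.mk (fun k => x ^ k / (k.factorial : ℝ)) = rescale x (exp ℝ) := by
    ext n
    simp [coeff_rescale, PowerSeries.coeff_exp, div_eq_mul_inv]
  rw [eulerPoly, this]; rfl

lemma G_add (x y : ℝ) : Gser (x + y) = Gser x * rescale y (exp ℝ) := by
  rw [Gser, Gser, ← exp_mul_exp_eq_exp_add]; ring

lemma euler_add (n : ℕ) (x y : ℝ) :
    eulerPoly n (x + y) =
      ∑ k ∈ range (n + 1), (n.choose k : ℝ) * eulerPoly k x * y ^ (n - k) := by
  rw [euler_eq, G_add, PowerSeries.coeff_mul, Nat.sum_antidiagonal_eq_sum_range_succ_mk,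
    Finset.mul_sum]
  refine Finset.sum_congr rfl fun k hk => ?_
  rw [euler_eq, coeff_rescale, PowerSeries.coeff_exp]
  have hk' : k ≤ n := Nat.lt_succ_iff.mp (Finset.mem_range.mp hk)
  have hfac : (n.choose k : ℝ) * k.factorial * (n - k).factorial = n.factorial := by
    rw_mod_cast [Nat.choose_mul_factorial_mul_factorial hk']
  have h1 : ((n - k).factorial : ℝ) ≠ 0 := Nat.cast_ne_zero.mpr (Nat.factorial_ne_zero _)
  rw [show (algebraMap ℚ ℝ) (1/((n-k).factorial : ℚ)) = (((n-k).factorial : ℝ))⁻¹ by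
    push_cast; simp]
  field_simp
  linear_combination ((PowerSeries.coeff k) (Gser x) * y ^ (n - k)) * hfac.symm

lemma rescale_inv (a : ℝ) (φ : PowerSeries ℝ) (h : PowerSeries.constantCoeff φ ≠ 0) :
    rescale a φ⁻¹ = (rescale a φ)⁻¹ := by
  rw [PowerSeries.eq_inv_iff_mul_eq_one]
  · rw [← map_mul, PowerSeries.inv_mul_cancel _ h, map_one]
  · rwa [← PowerSeries.coeff_zero_eq_constantCoeff_apply, coeff_rescale, pow_zero, one_mul,
      PowerSeries.coeff_zero_eq_constantCoeff_apply]

lemma G_reflect (x : ℝ) : Gser (1 - x) = rescale (-1) (Gser x) := by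
  have hinv : (rescale (-1) (exp ℝ) + 1)⁻¹ = exp ℝ * (exp ℝ + 1)⁻¹ := by
    rw [PowerSeries.inv_eq_iff_mul_eq_one]
    · have h1 : rescale (-1) (exp ℝ) * exp ℝ = 1 := by
        have := exp_mul_exp_eq_exp_add (-1 : ℝ) 1
        simpa [rescale_one] using this
      calc exp ℝ * (exp ℝ + 1)⁻¹ * (rescale (-1) (exp ℝ) + 1)
          = (exp ℝ + 1)⁻¹ * (rescale (-1) (exp ℝ) * exp ℝ + exp ℝ) := by ring
        _ = (exp ℝ + 1)⁻¹ * (exp ℝ + 1) := by rw [h1]; ring_nf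
        _ = 1 := PowerSeries.inv_mul_cancel _ ccne
    · rw [map_add, ← PowerSeries.coeff_zero_eq_constantCoeff_apply, coeff_rescale, pow_zero,
        one_mul, PowerSeries.coeff_zero_eq_constantCoeff_apply, PowerSeries.constantCoeff_exp]
      norm_num
  have hre : rescale (-1 : ℝ) (rescale x (exp ℝ)) = rescale (-x) (exp ℝ) := by
    rw [rescale_rescale]; norm_num
  have hmap : rescale (-1 : ℝ) (Gser x)
      = 2 * rescale (-x) (exp ℝ) * (rescale (-1) (exp ℝ) + 1)⁻¹ := by
    rw [Gser, map_mul, map_mul, map_ofNat, hre, rescale_inv _ _ ccne, map_add, map_one]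
  rw [hmap, hinv, Gser]
  have h2 : rescale (1 - x) (exp ℝ) = rescale (-x) (exp ℝ) * exp ℝ := by
    have h3 := exp_mul_exp_eq_exp_add (-x : ℝ) 1
    rw [rescale_one, RingHom.id_apply] at h3
    rw [show (1:ℝ) - x = -x + 1 by ring, ← h3]
  rw [h2]; ring

lemma euler_reflect (n : ℕ) (x : ℝ) :
    eulerPoly n (1 - x) = (-1) ^ n * eulerPoly n x := by
  rw [euler_eq, euler_eq, G_reflect, coeff_rescale]; ring

end EulerAux

theorem stmt10 (n : ℕ) (x : ℝ) :
    ∑ k ∈ Finset.range (n + 1), (n.choose k : ℝ) * (x - 1 / 2) ^ (n - k) *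
        ((-1) ^ k * (eulerPoly k (1 / 2) + (3 ^ k - 2) / 2 ^ k)) =
      (-1) ^ n * eulerPoly n (-x + 1) - 2 * (x - 1) ^ n + (x - 2) ^ n := by
  have key : ∀ k ∈ Finset.range (n + 1),
      (n.choose k : ℝ) * (x - 1 / 2) ^ (n - k) *
          ((-1) ^ k * (eulerPoly k (1 / 2) + (3 ^ k - 2) / 2 ^ k)) =
        (n.choose k : ℝ) * eulerPoly k (1 / 2) * (x - 1 / 2) ^ (n - k)
          + ((-3 / 2 : ℝ) ^ k * (x - 1 / 2) ^ (n - k) * (n.choose k))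
          - 2 * ((-1 / 2 : ℝ) ^ k * (x - 1 / 2) ^ (n - k) * (n.choose k)) := by
    intro k _
    have h12 : (-1 : ℝ) ^ k * eulerPoly k (1 / 2) = eulerPoly k (1 / 2) := by
      have h := euler_reflect k (1 / 2)
      rw [show (1 : ℝ) - 1 / 2 = 1 / 2 by norm_num] at h
      exact h.symm
    have hd : ((3 : ℝ) ^ k - 2) / 2 ^ k = (3 / 2 : ℝ) ^ k - 2 * (1 / 2 : ℝ) ^ k := by
      rw [div_pow, div_pow]
      have : (2 : ℝ) ^ k ≠ 0 := by positivity
      field_simp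
      simp
    have h3 : (-1 : ℝ) ^ k * (3 / 2 : ℝ) ^ k = (-3 / 2 : ℝ) ^ k := by
      rw [← mul_pow]; norm_num
    have h1 : (-1 : ℝ) ^ k * (1 / 2 : ℝ) ^ k = (-1 / 2 : ℝ) ^ k := by
      rw [← mul_pow]; norm_num
    rw [hd]
    linear_combination ((n.choose k : ℝ) * (x - 1 / 2) ^ (n - k)) * h12
      + ((n.choose k : ℝ) * (x - 1 / 2) ^ (n - k)) * h3
      - (2 * (n.choose k : ℝ) * (x - 1 / 2) ^ (n - k)) * h1
  rw [Finset.sum_congr rfl key, Finset.sum_sub_distrib, Finset.sum_add_distrib]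
  have S1 : ∑ k ∈ Finset.range (n + 1),
      (n.choose k : ℝ) * eulerPoly k (1 / 2) * (x - 1 / 2) ^ (n - k) = eulerPoly n x := by
    have h := euler_add n (1 / 2) (x - 1 / 2)
    rw [show (1 : ℝ) / 2 + (x - 1 / 2) = x by ring] at h
    exact h.symm
  have S2 : ∑ k ∈ Finset.range (n + 1),
      (-3 / 2 : ℝ) ^ k * (x - 1 / 2) ^ (n - k) * (n.choose k) = (x - 2) ^ n := by
    rw [← add_pow]; ring_nf
  have S3 : ∑ k ∈ Finset.range (n + 1),
      (-1 / 2 : ℝ) ^ k * (x - 1 / 2) ^ (n - k) * (n.choose k) = (x - 1) ^ n := by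
    rw [← add_pow]; ring_nf
  have hR : (-1 : ℝ) ^ n * eulerPoly n (-x + 1) = eulerPoly n x := by
    rw [show -x + 1 = 1 - x by ring, euler_reflect, ← mul_assoc, ← mul_pow]
    norm_num
  rw [S1, S2, ← Finset.mul_sum, S3, hR]
  ring
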